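/- arXiv:1807.11896 — 2 statements merged into one kernel-verified Lean document; each statement's English description precedes it below -/
import Mathlib

section
/- Suppose κ is weakly inaccessible and λ ≥ κ. Let A = {x ∈ P_κλ : x ∩ κ is an uncountable cardinal of cofinality ω}. Then A is a stationary subset of P_κλ (i.e., A meets every club subset of P_κλ). -/
universe u

open Cardinal FirstOrder

noncomputable section

namespace TwoCardinalWC

/-! ### Basic two-cardinal combinatorics in the ZFC universe `ZFSet` -/

/-- The cardinality of a ZF-set. -/
def cardZ (x : ZFSet.{u}) : Cardinal.{u + 1} := #x.toSet

/-- `x` is a von Neumann ordinal: a transitive set of transitive sets. -/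
def IsOrd (x : ZFSet.{u}) : Prop := x.IsTransitive ∧ ∀ y ∈ x.toSet, ZFSet.IsTransitive y

/-- `x` is a (von Neumann) cardinal: an ordinal not equinumerous to any of its members. -/
def IsCardZ (x : ZFSet.{u}) : Prop := IsOrd x ∧ ∀ y ∈ x.toSet, cardZ y < cardZ x

/-- `x` is an inaccessible cardinal. -/
def InaccZ (x : ZFSet.{u}) : Prop := IsCardZ x ∧ (cardZ x).IsInaccessible

/-- `x` is a weakly inaccessible cardinal: an uncountable regular limit cardinal. -/
def WeaklyInaccZ (x : ZFSet.{u}) : Prop :=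
  IsCardZ x ∧ (cardZ x).IsRegular ∧ ℵ₀ < cardZ x ∧
    ∀ d : Cardinal.{u + 1}, d < cardZ x → Order.succ d < cardZ x

/-- `κZ` is a Mahlo cardinal: inaccessible, and every club in `κZ` contains a regular cardinal. -/
def MahloZ (κZ : ZFSet.{u}) : Prop :=
  InaccZ κZ ∧ ∀ C : Set ZFSet.{u}, C ⊆ κZ.toSet →
    (∀ a ∈ κZ.toSet, ∃ b ∈ C, a ∈ b ∨ a = b) →
    (∀ b ∈ κZ.toSet, b ≠ ∅ → (∀ a ∈ b.toSet, ∃ c ∈ C, (a ∈ c ∨ a = c) ∧ c ∈ b) → b ∈ C) →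
    ∃ b ∈ C, IsCardZ b ∧ (cardZ b).IsRegular

/-- `P_μ(s)`: the collection of subsets of the ZF-set `s` of cardinality `< μ`. -/
def Plt (μ : Cardinal.{u + 1}) (s : ZFSet.{u}) : Set ZFSet.{u} := {y | y ⊆ s ∧ cardZ y < μ}

/-- `P_κ λ` as a collection of ZF-sets. -/
def PKL (κZ lamZ : ZFSet.{u}) : Set ZFSet.{u} := Plt (cardZ κZ) lamZ

/-- `P_κ λ` as a single ZF-set. -/
def PKLz (κZ lamZ : ZFSet.{u}) : ZFSet.{u} :=
  ZFSet.sep (fun y => cardZ y < cardZ κZ) (ZFSet.powerset lamZ)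

/-- `κ_x = |x ∩ κ|`. -/
def kap (κZ x : ZFSet.{u}) : Cardinal.{u + 1} := cardZ (x ∩ κZ)

/-- `P_{κ_x} x`: subsets of `x` of cardinality `< κ_x`. -/
def Psub (κZ x : ZFSet.{u}) : Set ZFSet.{u} := Plt (kap κZ x) x

/-- The weak club `C_f = {x ∈ P_κλ : f[P_{κ_x}x] ⊆ P_{κ_x}x}`. -/
def weakClub (κZ lamZ : ZFSet.{u}) (f : ZFSet.{u} → ZFSet.{u}) : Set ZFSet.{u} :=
  {x | x ∈ PKL κZ lamZ ∧ ∀ y ∈ Psub κZ x, f y ∈ Psub κZ x}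

/-- `S` is strongly stationary in `P_κλ`: it meets every weak club. -/
def stronglyStat (κZ lamZ : ZFSet.{u}) (S : Set ZFSet.{u}) : Prop :=
  ∀ f : ZFSet.{u} → ZFSet.{u}, (S ∩ weakClub κZ lamZ f).Nonempty

/-- `C` is `1`-closed: whenever `κ_x` is inaccessible and `C ∩ P_{κ_x}x` is
strongly stationary in `P_{κ_x}x`, then `x ∈ C`. -/
def oneClosed (κZ lamZ : ZFSet.{u}) (C : Set ZFSet.{u}) : Prop :=
  ∀ x ∈ PKL κZ lamZ, (kap κZ x).IsInaccessible →
    stronglyStat (x ∩ κZ) x (C ∩ Psub κZ x) → x ∈ C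

/-- `C ⊆ P_κλ` is `1`-club: strongly stationary and `1`-closed. -/
def oneClub (κZ lamZ : ZFSet.{u}) (C : Set ZFSet.{u}) : Prop :=
  C ⊆ PKL κZ lamZ ∧ stronglyStat κZ lamZ C ∧ oneClosed κZ lamZ C

/-- The image `f''x` of a ZF-set under an arbitrary (class) function. -/
def imgZ (f : ZFSet.{u} → ZFSet.{u}) (x : ZFSet.{u}) : ZFSet.{u} :=
  @ZFSet.image f (Classical.allZFSetDefinable _) x

/-! ### The language of set theory and elementarity -/

/-- Relation symbols: one binary relation (membership). -/
def memRel : ℕ → Type (u + 1)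
  | 2 => PUnit
  | _ => PEmpty

/-- The language of set theory: a single binary relation `∈`. -/
def Lmem : FirstOrder.Language.{u + 1, u + 1} := ⟨fun _ => PEmpty, memRel⟩

/-- The `∈`-structure on a collection of ZF-sets. -/
def memStruct (W : Set ZFSet.{u}) : Lmem.{u}.Structure ↥W where
  funMap := fun e _ => e.elim
  RelMap := fun {n} r v =>
    match n, r, v with
    | 0, r, _ => r.elim
    | 1, r, _ => r.elim
    | 2, _, v => ((v 0 : ZFSet.{u}) ∈ (v 1 : ZFSet.{u}))
    | (_ + 3), r, _ => r.elim

/-- Realization of an `∈`-formula in `(W, ∈)`. -/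
def RealizeMem (W : Set ZFSet.{u}) {n : ℕ} (φ : Lmem.{u}.BoundedFormula Empty n)
    (w : Fin n → ↥W) : Prop :=
  letI := memStruct W
  φ.Realize (fun e => e.elim) w

/-- `j` is an elementary embedding from `(Ms, ∈)` into `(Ns, ∈)`. -/
def IsElemEmb (Ms Ns : Set ZFSet.{u}) (j : ZFSet.{u} → ZFSet.{u}) : Prop :=
  ∃ h : ∀ a ∈ Ms, j a ∈ Ns,
    ∀ (n : ℕ) (φ : Lmem.{u}.BoundedFormula Empty n) (w : Fin n → ↥Ms),
      RealizeMem Ms φ w ↔ RealizeMem Ns φ (fun i => ⟨j ((w i : ZFSet.{u})), h _ (w i).2⟩)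

/-- A predicate on ZF-sets is definable over `Mz` (with parameters from `Mz`). -/
def DefinableOver (Mz : ZFSet.{u}) (p : ZFSet.{u} → Prop) : Prop :=
  ∃ (n : ℕ) (φ : Lmem.{u}.BoundedFormula Empty (n + 1)) (v : Fin n → ↥Mz.toSet),
    ∀ (a : ZFSet.{u}) (ha : a ∈ Mz.toSet), p a ↔ RealizeMem Mz.toSet φ (Fin.snoc v ⟨a, ha⟩)

/-- A class function is definable over `Mz` (with parameters from `Mz`). -/
def DefinableFunOver (Mz : ZFSet.{u}) (f : ZFSet.{u} → ZFSet.{u}) : Prop :=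
  (∀ a, a ∈ Mz → f a ∈ Mz) ∧
  ∃ (n : ℕ) (φ : Lmem.{u}.BoundedFormula Empty (n + 2)) (v : Fin n → ↥Mz.toSet),
    ∀ (a : ZFSet.{u}) (ha : a ∈ Mz.toSet) (b : ZFSet.{u}) (hb : b ∈ Mz.toSet),
      f a = b ↔ RealizeMem Mz.toSet φ (Fin.snoc (Fin.snoc v ⟨a, ha⟩) ⟨b, hb⟩)

/-- `Mz` is a transitive model of `ZFC⁻`: transitive and closed under the
`ZFC⁻` operations (pairing, union, infinity, definable separation and replacement). -/
def SatZFCminus (Mz : ZFSet.{u}) : Prop :=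
  Mz.IsTransitive ∧ ZFSet.omega ∈ Mz ∧
  (∀ a, a ∈ Mz → ∀ b, b ∈ Mz → ({a, b} : ZFSet.{u}) ∈ Mz) ∧
  (∀ a, a ∈ Mz → ZFSet.sUnion a ∈ Mz) ∧
  (∀ p : ZFSet.{u} → Prop, DefinableOver Mz p → ∀ a, a ∈ Mz → ZFSet.sep p a ∈ Mz) ∧
  (∀ f : ZFSet.{u} → ZFSet.{u}, DefinableFunOver Mz f → ∀ a, a ∈ Mz → imgZ f a ∈ Mz)

/-- `W ⊆ P_κλ` is weakly compact: for every `A ⊆ λ` there are a transitive model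
`M ⊨ ZFC⁻` with `λ, A, W ∈ M`, closed under `<κ`-sized subsets, a transitive `N` and an
elementary embedding `j : M → N` with critical point `κ`, `j(κ) > λ` and `j''λ ∈ j(W)`. -/
def IsWC (κZ lamZ W : ZFSet.{u}) : Prop :=
  W ⊆ PKLz κZ lamZ ∧
  ∀ A : ZFSet.{u}, A ⊆ lamZ →
    ∃ (Mz Nz : ZFSet.{u}) (j : ZFSet.{u} → ZFSet.{u}),
      SatZFCminus Mz ∧ Nz.IsTransitive ∧
      lamZ ∈ Mz ∧ A ∈ Mz ∧ W ∈ Mz ∧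
      (∀ s : ZFSet.{u}, s.toSet ⊆ Mz.toSet → cardZ s < cardZ κZ → s ∈ Mz) ∧
      IsElemEmb Mz.toSet Nz.toSet j ∧
      (∀ a, a ∈ κZ → j a = a) ∧ j κZ ≠ κZ ∧
      lamZ ∈ j κZ ∧ imgZ j lamZ ∈ j W

/-! ### The two-cardinal cumulative hierarchy -/

/-- Baumgartner's hierarchy `V_α(δ, A)`:
`V_0 = A`, `V_{α+1} = P_δ(V_α) ∪ V_α`, unions at limits. -/
def Vh (δ : Cardinal.{u + 1}) (A : Set ZFSet.{u}) (α : Ordinal.{u + 1}) : Set ZFSet.{u} :=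
  Ordinal.limitRecOn α A (fun _ ih => {y | y.toSet ⊆ ih ∧ cardZ y < δ} ∪ ih)
    (fun o _ ih => {s | ∃ β, ∃ h : β < o, s ∈ ih β h})

/-- The usual von Neumann hierarchy, as a collection of ZF-sets. -/
def VN (α : Ordinal.{u + 1}) : Set ZFSet.{u} :=
  Ordinal.limitRecOn α (∅ : Set ZFSet.{u}) (fun _ ih => {y | y.toSet ⊆ ih})
    (fun o _ ih => {s | ∃ β, ∃ h : β < o, s ∈ ih β h})

/-! ### The language with `∈` and a unary predicate `R` -/

/-- Relation symbols: a unary predicate and a binary relation. -/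
def lrRel : ℕ → Type (u + 1)
  | 1 => PUnit
  | 2 => PUnit
  | _ => PEmpty

/-- The language with membership and one unary predicate. -/
def LR : FirstOrder.Language.{u + 1, u + 1} := ⟨fun _ => PEmpty, lrRel⟩

/-- The structure `(W, ∈, R)`. -/
def rStruct (W R : Set ZFSet.{u}) : LR.{u}.Structure ↥W where
  funMap := fun e _ => e.elim
  RelMap := fun {n} r v =>
    match n, r, v with
    | 0, r, _ => r.elim
    | 1, _, v => ((v 0 : ZFSet.{u}) ∈ R)
    | 2, _, v => ((v 0 : ZFSet.{u}) ∈ (v 1 : ZFSet.{u}))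
    | (_ + 3), r, _ => r.elim

/-- Realization of an `LR`-formula in `(W, ∈, R)`. -/
def RealizeR (W R : Set ZFSet.{u}) {n : ℕ} (φ : LR.{u}.BoundedFormula Empty n)
    (w : Fin n → ↥W) : Prop :=
  letI := rStruct W R
  φ.Realize (fun e => e.elim) w

/-- Satisfaction of a first-order sentence in `(W, ∈, R)`. -/
def SatR (W R : Set ZFSet.{u}) (φ : LR.{u}.Sentence) : Prop :=
  RealizeR W R φ (fun i => i.elim0)

/-- `(W₁, ∈, R ∩ W₁)` is an elementary substructure of `(W₂, ∈, R)`. -/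
def ElemSubR (W₁ W₂ R : Set ZFSet.{u}) : Prop :=
  ∃ h : W₁ ⊆ W₂,
    ∀ (n : ℕ) (φ : LR.{u}.BoundedFormula Empty n) (w : Fin n → ↥W₁),
      RealizeR W₁ (R ∩ W₁) φ w ↔ RealizeR W₂ R φ (fun i => ⟨(w i : ZFSet.{u}), h (w i).2⟩)


/-- `C` is a club subset of `P_κλ`: cofinal in `(P_κλ, ⊆)` and closed under unions of
`⊆`-increasing chains of length less than `κ`. -/
def chainClub (κZ lamZ : ZFSet.{u}) (C : Set ZFSet.{u}) : Prop :=
  C ⊆ PKL κZ lamZ ∧ (∀ x ∈ PKL κZ lamZ, ∃ y ∈ C, x ⊆ y) ∧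
  ∀ η : Ordinal.{u + 1}, η ≠ 0 → η < (cardZ κZ).ord →
    ∀ g : Ordinal.{u + 1} → ZFSet.{u},
      (∀ β, β < η → g β ∈ C) →
      (∀ β₁ β₂, β₁ < β₂ → β₂ < η → g β₁ ⊆ g β₂) →
      ZFSet.sep (fun t => ∃ β, ∃ _ : β < η, t ∈ g β) lamZ ∈ C

/-- `s` is an uncountable cardinal of cofinality `ω`. -/
def UncountableCardCofOmega (s : ZFSet.{u}) : Prop :=
  IsCardZ s ∧ ℵ₀ < cardZ s ∧
  ∃ g : ℕ → ZFSet.{u}, (∀ n, g n ∈ s) ∧ ∀ t, t ∈ s → ∃ n, t ∈ g n ∨ t = g n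

section Aux

open ZFSet Ordinal Order

variable {a b c x y κZ lamZ : ZFSet.{u}}

theorem IsOrd.mem (h : IsOrd x) (hy : y ∈ x) : IsOrd y := by
  refine ⟨h.2 y hy, fun z hz => h.2 z (h.1 y hy hz)⟩

theorem trichotomy : ∀ a b : ZFSet.{u}, IsOrd a → IsOrd b → a ∈ b ∨ a = b ∨ b ∈ a := by
  intro a
  induction a using ZFSet.inductionOn with
  | _ a iha =>
    intro b
    induction b using ZFSet.inductionOn with
    | _ b ihb =>
      intro ha hb
      by_cases hab : a ∈ b
      · exact Or.inl hab
      by_cases hba : b ∈ a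
      · exact Or.inr (Or.inr hba)
      refine Or.inr (Or.inl (ZFSet.ext fun t => ⟨fun ht => ?_, fun ht => ?_⟩))
      · rcases iha t ht b (ha.mem ht) hb with h | h | h
        · exact h
        · rw [h] at ht; exact absurd ht hba
        · exact absurd (ha.1 t ht h) hba
      · rcases ihb t ht ha (hb.mem ht) with h | h | h
        · exact absurd (hb.1 t ht h) hab
        · rw [← h] at ht; exact absurd ht hab
        · exact h

theorem mem_or_eq_of_subset (ha : IsOrd a) (hb : IsOrd b) (hab : a ⊆ b) : a ∈ b ∨ a = b := by
  rcases trichotomy a b ha hb with h | h | h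
  · exact Or.inl h
  · exact Or.inr h
  · exact absurd (hab h) (ZFSet.mem_irrefl b)

theorem exists_mem_rank_eq :
    ∀ b : ZFSet.{u}, IsOrd b → ∀ γ : Ordinal.{u}, γ < b.rank → ∃ c ∈ b, ZFSet.rank c = γ := by
  intro b
  induction b using ZFSet.inductionOn with
  | _ b ih =>
    intro hb γ hγ
    obtain ⟨c, hc, hγc⟩ := ZFSet.lt_rank_iff.1 hγ
    rcases eq_or_lt_of_le hγc with h' | h'
    · exact ⟨c, hc, h'.symm⟩
    · obtain ⟨c', hc', rfl⟩ := ih c hc (hb.mem hc) γ h'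
      exact ⟨c', hb.1 c hc hc', rfl⟩

theorem cardZ_eq_of_isOrd (hb : IsOrd b) : cardZ b = Cardinal.lift.{u + 1} b.rank.card := by
  rw [cardZ, ← Ordinal.mk_Iio_ordinal]
  refine Cardinal.mk_congr
    (Equiv.ofBijective (fun c => ⟨ZFSet.rank c.1, ZFSet.rank_lt_of_mem c.2⟩) ⟨?_, ?_⟩)
  · rintro ⟨c₁, h₁⟩ ⟨c₂, h₂⟩ he
    simp only [Subtype.mk.injEq] at he ⊢
    rcases trichotomy c₁ c₂ (hb.mem h₁) (hb.mem h₂) with h | h | h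
    · exact absurd he (ne_of_lt (ZFSet.rank_lt_of_mem h))
    · exact h
    · exact absurd he (ne_of_gt (ZFSet.rank_lt_of_mem h))
  · rintro ⟨γ, hγ⟩
    obtain ⟨c, hc, hcr⟩ := exists_mem_rank_eq b hb γ hγ
    exact ⟨⟨c, hc⟩, Subtype.ext hcr⟩

theorem cardZ_mono (h : x ⊆ y) : cardZ x ≤ cardZ y :=
  Cardinal.mk_le_mk_of_subset (ZFSet.coe_subset_coe.2 h)

/-- membership criterion in `κZ`. -/
theorem mem_kappa (hκord : IsOrd κZ) (hb : IsOrd b) (hsub : b ⊆ κZ)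
    (hcard : cardZ b < cardZ κZ) : b ∈ κZ := by
  rcases mem_or_eq_of_subset hb hκord hsub with h | rfl
  · exact h
  · exact absurd hcard (lt_irrefl _)

theorem exists_bound (hκord : IsOrd κZ) (hκ : WeaklyInaccZ κZ)
    (hy : y ⊆ κZ) (hcy : cardZ y < cardZ κZ) :
    ∃ β, β ∈ κZ ∧ ∀ s ∈ y, s ∈ β := by
  obtain ⟨⟨_, hcardκ⟩, hreg, hℵ, _⟩ := hκ
  have hordmem : ∀ s ∈ y, IsOrd s := fun s hs => hκord.mem (hy hs)
  set b : ZFSet.{u} := ⋃₀ y with hbdef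
  have hordb : IsOrd b := by
    refine ⟨ZFSet.IsTransitive.sUnion' fun s hs => (hordmem s hs).1, fun z hz => ?_⟩
    obtain ⟨s, hs, hzs⟩ := ZFSet.mem_sUnion.1 hz
    exact ((hordmem s hs).mem hzs).1
  have hbsub : b ⊆ κZ := by
    intro z hz
    obtain ⟨s, hs, hzs⟩ := ZFSet.mem_sUnion.1 hz
    exact hκord.1 s (hy hs) hzs
  have hbts : b.toSet = ⋃ s : y.toSet, (s : ZFSet.{u}).toSet := by
    ext t
    constructor
    · intro ht
      obtain ⟨s, hs, hts⟩ := ZFSet.mem_sUnion.1 ((Iff.rfl : t ∈ b.toSet ↔ t ∈ b).1 ht)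
      exact Set.mem_iUnion.2 ⟨⟨s, hs⟩, (Iff.rfl : t ∈ s.toSet ↔ t ∈ s).2 hts⟩
    · intro ht
      obtain ⟨⟨s, hs⟩, hts⟩ := Set.mem_iUnion.1 ht
      exact (Iff.rfl : t ∈ b.toSet ↔ t ∈ b).2 (ZFSet.mem_sUnion.2 ⟨s, hs, (Iff.rfl : t ∈ s.toSet ↔ t ∈ s).1 hts⟩)
  have hbcard : cardZ b < cardZ κZ := by
    calc cardZ b ≤ Cardinal.sum (fun s : y.toSet => cardZ (s : ZFSet.{u})) := by
          rw [cardZ, hbts]; exact Cardinal.mk_iUnion_le_sum_mk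
      _ < cardZ κZ :=
          Cardinal.sum_lt_of_isRegular hreg hcy fun s => hcardκ s (hy s.2)
  have hbκ : b ∈ κZ := mem_kappa hκord hordb hbsub hbcard
  refine ⟨insert b b, ?_, ?_⟩
  · have hordβ : IsOrd (insert b b) := by
      constructor
      · intro z hz t ht
        rcases ZFSet.mem_insert_iff.1 hz with rfl | hz
        · exact ZFSet.mem_insert_iff.2 (Or.inr ht)
        · exact ZFSet.mem_insert_iff.2 (Or.inr (hordb.1 z hz ht))
      · intro z hz
        rcases ZFSet.mem_insert_iff.1 hz with rfl | hz
        · exact hordb.1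
        · exact (hordb.mem hz).1
    refine mem_kappa hκord hordβ ?_ ?_
    · intro z hz
      rcases ZFSet.mem_insert_iff.1 hz with rfl | hz
      · exact hbκ
      · exact hbsub hz
    · calc cardZ (insert b b) ≤ cardZ b + 1 := by
            rw [cardZ, show (insert b b).toSet = insert b b.toSet from ZFSet.coe_insert b b]; exact Cardinal.mk_insert_le
        _ < cardZ κZ :=
            Cardinal.add_lt_of_lt hℵ.le hbcard (one_lt_aleph0.trans hℵ)
  · intro s hs
    have hssub : s ⊆ b := fun t ht => ZFSet.mem_sUnion.2 ⟨s, hs, ht⟩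
    rcases mem_or_eq_of_subset (hordmem s hs) hordb hssub with h | rfl
    · exact ZFSet.mem_insert_iff.2 (Or.inr h)
    · exact ZFSet.mem_insert _ _

theorem exists_stage (hκord : IsOrd κZ) (hκ : WeaklyInaccZ κZ) (d₀ : Cardinal.{u})
    (hd : ℵ₀ ≤ d₀) (hdK : Cardinal.lift.{u + 1} d₀ < cardZ κZ) :
    ∃ μ, μ ∈ κZ ∧ IsCardZ μ ∧ ℵ₀ < cardZ μ ∧
      ∀ c, IsOrd c → cardZ c ≤ Cardinal.lift.{u + 1} d₀ → c ∈ μ := by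
  obtain ⟨⟨_, hcardκ⟩, hreg, hℵ, hsucc⟩ := hκ
  set o : Ordinal.{u} := (Order.succ d₀).ord with hodef
  have hκrank : cardZ κZ = Cardinal.lift.{u + 1} κZ.rank.card := cardZ_eq_of_isOrd hκord
  have h1 : o ≤ κZ.rank := by
    by_contra h
    push_neg at h
    have : κZ.rank.card ≤ d₀ := Order.lt_succ_iff.1 (Cardinal.lt_ord.1 h)
    exact absurd (hκrank.trans_le (Cardinal.lift_le.2 this)) (not_le.2 hdK)
  set μ : ZFSet.{u} := ZFSet.sep (fun c => ZFSet.rank c < o) κZ with hμdef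
  have hμsub : μ ⊆ κZ := fun z hz => (ZFSet.mem_sep.1 hz).1
  have hμmem : ∀ z, z ∈ μ ↔ z ∈ κZ ∧ ZFSet.rank z < o := fun z => ZFSet.mem_sep
  have hordμ : IsOrd μ := by
    constructor
    · intro z hz t ht
      obtain ⟨hzκ, hzo⟩ := (hμmem z).1 hz
      exact (hμmem t).2 ⟨hκord.1 z hzκ ht, (ZFSet.rank_lt_of_mem ht).trans hzo⟩
    · intro z hz
      exact (hκord.mem (hμsub hz)).1
  have hμrank : μ.rank = o := by
    apply le_antisymm
    · exact ZFSet.rank_le_iff.2 fun z hz => ((hμmem z).1 hz).2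
    · refine le_of_forall_lt fun γ hγ => ?_
      obtain ⟨c, hc, rfl⟩ := exists_mem_rank_eq κZ hκord γ (hγ.trans_le h1)
      exact ZFSet.rank_lt_of_mem ((hμmem c).2 ⟨hc, hγ⟩)
  have hμcard : cardZ μ = Order.succ (Cardinal.lift.{u + 1} d₀) := by
    rw [cardZ_eq_of_isOrd hordμ, hμrank, hodef, Cardinal.card_ord, Cardinal.lift_succ]
  have hcardd : ∀ c, IsOrd c → (c ∈ μ ↔ cardZ c ≤ Cardinal.lift.{u + 1} d₀) := by
    intro c hc
    constructor
    · intro hcμ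
      rw [cardZ_eq_of_isOrd hc]
      exact Cardinal.lift_le.2 (Order.lt_succ_iff.1 (Cardinal.lt_ord.1 ((hμmem c).1 hcμ).2))
    · intro hcd
      have hro : c.rank < o := by
        rw [hodef, Cardinal.lt_ord, Order.lt_succ_iff, ← Cardinal.lift_le.{u + 1}]
        exact (cardZ_eq_of_isOrd hc).symm.trans_le hcd
      refine (hμmem c).2 ⟨?_, hro⟩
      rcases trichotomy c κZ hc hκord with h | rfl | h
      · exact h
      · exact absurd hro (not_lt.2 h1)
      · exact absurd ((ZFSet.rank_lt_of_mem h).trans hro) (not_lt.2 h1)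
  have huncnt : ℵ₀ < cardZ μ := by
    rw [hμcard]
    exact lt_of_le_of_lt (by simpa using Cardinal.lift_le.{u + 1}.2 hd) (Order.lt_succ _)
  refine ⟨μ, ?_, ⟨hordμ, ?_⟩, huncnt, fun c hc hcd => (hcardd c hc).2 hcd⟩
  · refine mem_kappa hκord hordμ hμsub ?_
    rw [hμcard]
    exact hsucc _ hdK
  · intro z hz
    have := (hcardd z (hκord.mem (hμsub hz))).1 hz
    exact this.trans_lt (hμcard ▸ Order.lt_succ _)



theorem step_lemma {κZ lamZ : ZFSet.{u}} (hκord : IsOrd κZ) (hκ : WeaklyInaccZ κZ)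
    (hκlam : κZ ⊆ lamZ) {C : Set ZFSet.{u}} (hC : chainClub κZ lamZ C)
    {x μ : ZFSet.{u}} (hx : x ∈ C) (hμ : μ ∈ κZ) :
    ∃ q : ZFSet.{u} × ZFSet.{u}, (q.1 ∈ C ∧ q.2 ∈ κZ) ∧
      (IsCardZ q.2 ∧ ℵ₀ < cardZ q.2 ∧ μ ∈ q.2 ∧
        (∀ t, t ∈ x → t ∈ κZ → t ∈ q.2) ∧ q.2 ⊆ q.1 ∧ x ⊆ q.1) := by
  have hℵ : ℵ₀ < cardZ κZ := hκ.2.2.1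
  have hcardκ : ∀ z ∈ κZ, cardZ z < cardZ κZ := fun z hz => hκ.1.2 z hz
  obtain ⟨hxlam, hxK⟩ : x ⊆ lamZ ∧ cardZ x < cardZ κZ := hC.1 hx
  have hysub : x ∩ κZ ⊆ κZ := fun t ht => (ZFSet.mem_inter.1 ht).2
  have hycard : cardZ (x ∩ κZ) < cardZ κZ :=
    lt_of_le_of_lt (cardZ_mono fun t ht => (ZFSet.mem_inter.1 ht).1) hxK
  obtain ⟨β, hβκ, hβbd⟩ := exists_bound hκord hκ hysub hycard
  have hordβ : IsOrd β := hκord.mem hβκ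
  have hordμ : IsOrd μ := hκord.mem hμ
  have hordc : IsOrd (β ∪ μ) := by
    refine ⟨ZFSet.IsTransitive.union hordβ.1 hordμ.1, fun z hz => ?_⟩
    rcases ZFSet.mem_union.1 hz with hz | hz
    · exact (hordβ.mem hz).1
    · exact (hordμ.mem hz).1
  have hcsubκ : β ∪ μ ⊆ κZ := by
    intro z hz
    rcases ZFSet.mem_union.1 hz with hz | hz
    · exact hκord.1 β hβκ hz
    · exact hκord.1 μ hμ hz
  have hts : (β ∪ μ).toSet = β.toSet ∪ μ.toSet := by
    ext t
    exact ZFSet.mem_union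
  have hccard : cardZ (β ∪ μ) < cardZ κZ := by
    calc cardZ (β ∪ μ) ≤ cardZ β + cardZ μ := by
          rw [cardZ, hts]; exact Cardinal.mk_union_le _ _
      _ < cardZ κZ := Cardinal.add_lt_of_lt hℵ.le (hcardκ β hβκ) (hcardκ μ hμ)
  have hcκ : β ∪ μ ∈ κZ := mem_kappa hκord hordc hcsubκ hccard
  set d₀ : Cardinal.{u} := max ℵ₀ (ZFSet.rank (β ∪ μ)).card with hd₀def
  have hliftd : Cardinal.lift.{u + 1} d₀ = max ℵ₀ (cardZ (β ∪ μ)) := by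
    rw [hd₀def, Cardinal.lift_max, Cardinal.lift_aleph0, cardZ_eq_of_isOrd hordc]
  have hdK : Cardinal.lift.{u + 1} d₀ < cardZ κZ := by
    rw [hliftd]; exact max_lt hℵ (hcardκ _ hcκ)
  obtain ⟨μ', hμ'κ, hμ'card, hμ'un, hμ'univ⟩ :=
    exists_stage hκord hκ d₀ (le_max_left _ _) hdK
  have hcμ' : β ∪ μ ∈ μ' :=
    hμ'univ _ hordc (by rw [hliftd]; exact le_max_right _ _)
  have hcsub : β ∪ μ ⊆ μ' := hμ'card.1.1 _ hcμ'
  have hμμ' : μ ∈ μ' := by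
    have hμc : μ ⊆ β ∪ μ := fun t ht => ZFSet.mem_union.2 (Or.inr ht)
    rcases mem_or_eq_of_subset hordμ hordc hμc with h | h
    · exact hcsub h
    · rw [h]; exact hcμ'
  have hcover : ∀ t, t ∈ x → t ∈ κZ → t ∈ μ' := fun t ht htκ =>
    hcsub (ZFSet.mem_union.2 (Or.inl (hβbd t (ZFSet.mem_inter.2 ⟨ht, htκ⟩))))
  have hmulam : μ' ⊆ lamZ := fun t ht => hκlam (hκord.1 μ' hμ'κ ht)
  have htsx : (x ∪ μ').toSet = x.toSet ∪ μ'.toSet := by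
    ext t
    exact ZFSet.mem_union
  have hzP : x ∪ μ' ∈ PKL κZ lamZ := by
    refine ⟨?_, ?_⟩
    · intro t ht
      rcases ZFSet.mem_union.1 ht with ht | ht
      · exact hxlam ht
      · exact hmulam ht
    · calc cardZ (x ∪ μ') ≤ cardZ x + cardZ μ' := by
            rw [cardZ, htsx]; exact Cardinal.mk_union_le _ _
        _ < cardZ κZ := Cardinal.add_lt_of_lt hℵ.le hxK (hcardκ _ hμ'κ)
  obtain ⟨x', hx'C, hzx'⟩ := hC.2.1 _ hzP
  refine ⟨(x', μ'), ⟨hx'C, hμ'κ⟩, hμ'card, hμ'un, hμμ', hcover, ?_, ?_⟩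
  · exact fun t ht => hzx' (ZFSet.mem_union.2 (Or.inr ht))
  · exact fun t ht => hzx' (ZFSet.mem_union.2 (Or.inl ht))


end Aux

/-- If `κ` is weakly inaccessible and `λ ≥ κ` then
`A = {x ∈ P_κλ : x ∩ κ` is an uncountable cardinal of cofinality `ω}` is stationary. -/
theorem cofinality_omega_set_stationary (κZ lamZ : ZFSet.{u})
    (hκord : IsOrd κZ) (hκ : WeaklyInaccZ κZ) (hlamord : IsOrd lamZ) (hκlam : κZ ⊆ lamZ) :
    ∀ C : Set ZFSet.{u}, chainClub κZ lamZ C →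
      ({x | x ∈ PKL κZ lamZ ∧ UncountableCardCofOmega (x ∩ κZ)} ∩ C).Nonempty := by
  intro C hC
  have hℵ : ℵ₀ < cardZ κZ := hκ.2.2.1
  -- a first element of the chain
  have hemp : (∅ : ZFSet.{u}) ∈ PKL κZ lamZ := by
    refine ⟨ZFSet.empty_subset lamZ, ?_⟩
    have h0 : cardZ (∅ : ZFSet.{u}) = 0 := by
      rw [cardZ, show (∅ : ZFSet.{u}).toSet = ∅ from ZFSet.coe_empty]; exact Cardinal.mk_emptyCollection _
    rw [h0]
    exact aleph0_pos.trans hℵ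
  obtain ⟨x₀, hx₀C, -⟩ := hC.2.1 _ hemp
  obtain ⟨μ₀, hμ₀κ, -⟩ := exists_stage hκord hκ ℵ₀ le_rfl (by rw [Cardinal.lift_aleph0]; exact hℵ)
  -- the recursive step
  have hstep : ∀ p : {q : ZFSet.{u} × ZFSet.{u} // q.1 ∈ C ∧ q.2 ∈ κZ},
      ∃ r : {q : ZFSet.{u} × ZFSet.{u} // q.1 ∈ C ∧ q.2 ∈ κZ},
        IsCardZ r.1.2 ∧ ℵ₀ < cardZ r.1.2 ∧ p.1.2 ∈ r.1.2 ∧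
        (∀ t, t ∈ p.1.1 → t ∈ κZ → t ∈ r.1.2) ∧ r.1.2 ⊆ r.1.1 ∧ p.1.1 ⊆ r.1.1 := by
    rintro ⟨⟨x, μ⟩, hx, hμ⟩
    obtain ⟨q, hq1, hq2⟩ := step_lemma hκord hκ hκlam hC hx hμ
    exact ⟨⟨q, hq1⟩, hq2⟩
  choose F hF using hstep
  set p₀ : {q : ZFSet.{u} × ZFSet.{u} // q.1 ∈ C ∧ q.2 ∈ κZ} := ⟨(x₀, μ₀), hx₀C, hμ₀κ⟩ with hp₀
  set xs : ℕ → ZFSet.{u} := fun n => (F^[n] p₀).1.1 with hxs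
  set ms : ℕ → ZFSet.{u} := fun n => (F^[n] p₀).1.2 with hms
  have hQ : ∀ n : ℕ, IsCardZ (ms (n + 1)) ∧ ℵ₀ < cardZ (ms (n + 1)) ∧ ms n ∈ ms (n + 1) ∧
      (∀ t, t ∈ xs n → t ∈ κZ → t ∈ ms (n + 1)) ∧ ms (n + 1) ⊆ xs (n + 1) ∧
      xs n ⊆ xs (n + 1) := by
    intro n
    have := hF (F^[n] p₀)
    rw [← Function.iterate_succ_apply' F n p₀] at this
    exact this
  have hxsC : ∀ n, xs n ∈ C := fun n => (F^[n] p₀).2.1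
  have hmsκ : ∀ n, ms n ∈ κZ := fun n => (F^[n] p₀).2.2
  have hmono : ∀ m n : ℕ, m ≤ n → xs m ⊆ xs n := by
    intro m n h
    induction n, h using Nat.le_induction with
    | base => exact fun t ht => ht
    | succ n hmn ih => exact fun t ht => (hQ n).2.2.2.2.2 (ih ht)
  -- the chain indexed by ordinals below ω
  set G : Ordinal.{u + 1} → ZFSet.{u} := fun β => xs (Cardinal.toNat β.card) with hG
  have hGnat : ∀ n : ℕ, G (n : Ordinal.{u + 1}) = xs n := by
    intro n
    show xs (Cardinal.toNat ((n : Ordinal.{u + 1})).card) = xs n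
    rw [Ordinal.card_nat, Cardinal.toNat_natCast]
  have hωlt : (Ordinal.omega0 : Ordinal.{u + 1}) < (cardZ κZ).ord := by
    rw [Cardinal.lt_ord, Ordinal.card_omega0]
    exact hℵ
  have hXC : ZFSet.sep (fun t => ∃ β, ∃ _ : β < Ordinal.omega0, t ∈ G β) lamZ ∈ C := by
    refine hC.2.2 Ordinal.omega0 Ordinal.omega0_ne_zero hωlt G ?_ ?_
    · intro β hβ
      obtain ⟨n, rfl⟩ := Ordinal.lt_omega0.1 hβ
      rw [hGnat n]
      exact hxsC n
    · intro β₁ β₂ h12 h2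
      obtain ⟨n₂, rfl⟩ := Ordinal.lt_omega0.1 h2
      obtain ⟨n₁, rfl⟩ := Ordinal.lt_omega0.1 (h12.trans h2)
      rw [hGnat n₁, hGnat n₂]
      exact hmono n₁ n₂ (Nat.cast_lt.1 h12).le
  set X : ZFSet.{u} := ZFSet.sep (fun t => ∃ β, ∃ _ : β < Ordinal.omega0, t ∈ G β) lamZ with hX
  have hforward : ∀ t, t ∈ X → t ∈ κZ → ∃ n, t ∈ ms (n + 1) := by
    intro t ht htκ
    obtain ⟨-, β, hβ, htG⟩ := ZFSet.mem_sep.1 ht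
    obtain ⟨n, rfl⟩ := Ordinal.lt_omega0.1 hβ
    rw [hGnat n] at htG
    exact ⟨n, (hQ n).2.2.2.1 t htG htκ⟩
  have hxsX : ∀ n, xs n ⊆ X := by
    intro n t ht
    refine ZFSet.mem_sep.2 ⟨(hC.1 (hxsC n)).1 ht, (n : Ordinal.{u + 1}),
      Ordinal.nat_lt_omega0 n, ?_⟩
    rw [hGnat n]
    exact ht
  have hmsX : ∀ n, ms (n + 1) ⊆ X ∩ κZ := by
    intro n t ht
    exact ZFSet.mem_inter.2 ⟨hxsX (n + 1) ((hQ n).2.2.2.2.1 ht),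
      hκord.1 _ (hmsκ (n + 1)) ht⟩
  have hmsmem : ∀ n, ms (n + 1) ∈ X ∩ κZ := by
    intro n
    exact ZFSet.mem_inter.2 ⟨hxsX (n + 2) ((hQ (n + 1)).2.2.2.2.1 ((hQ (n + 1)).2.2.1)),
      hmsκ (n + 1)⟩
  have hordX : IsOrd (X ∩ κZ) := by
    constructor
    · intro t ht t' ht'
      obtain ⟨htX, htκ⟩ := ZFSet.mem_inter.1 ht
      obtain ⟨n, htm⟩ := hforward t htX htκ
      exact hmsX n ((hQ n).1.1.1 t htm ht')
    · intro t ht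
      exact (hκord.mem (ZFSet.mem_inter.1 ht).2).1
  refine ⟨X, ⟨⟨hC.1 hXC, ⟨hordX, ?_⟩, ?_, fun n => ms (n + 1), hmsmem, ?_⟩, hXC⟩⟩
  · intro c hc
    obtain ⟨hcX, hcκ⟩ := ZFSet.mem_inter.1 hc
    obtain ⟨n, hcm⟩ := hforward c hcX hcκ
    exact lt_of_lt_of_le ((hQ n).1.2 c hcm) (cardZ_mono (hmsX n))
  · exact lt_of_lt_of_le (hQ 0).2.1 (cardZ_mono (hmsX 0))
  · intro t ht
    obtain ⟨htX, htκ⟩ := ZFSet.mem_inter.1 ht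
    obtain ⟨n, htm⟩ := hforward t htX htκ
    exact ⟨n, Or.inl htm⟩

end TwoCardinalWC
end
end

section
/- Suppose κ is inaccessible and λ ≥ κ. If X ⊆ V_κ(κ, λ) and |X| < κ, then there exists x ∈ P_κλ such that X ⊆ V_{κ_x}(κ_x, x). -/
universe u

open Cardinal FirstOrder

noncomputable section

namespace TwoCardinalWC

theorem Vh_zero (δ : Cardinal.{u + 1}) (A : Set ZFSet.{u}) : Vh δ A 0 = A :=
  Ordinal.limitRecOn_zero _ _ _

theorem Vh_succ (δ : Cardinal.{u + 1}) (A : Set ZFSet.{u}) (β : Ordinal.{u + 1}) :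
    Vh δ A (Order.succ β) = {y | y.toSet ⊆ Vh δ A β ∧ cardZ y < δ} ∪ Vh δ A β :=
  Ordinal.limitRecOn_succ _ _ _ _

theorem Vh_limit (δ : Cardinal.{u + 1}) (A : Set ZFSet.{u}) {o : Ordinal.{u + 1}}
    (h : Order.IsSuccLimit o) : Vh δ A o = {s | ∃ β, ∃ _ : β < o, s ∈ Vh δ A β} :=
  Ordinal.limitRecOn_limit _ _ _ _ h

theorem Vh_mono (δ : Cardinal.{u + 1}) (A : Set ZFSet.{u}) :
    ∀ {γ β : Ordinal.{u + 1}}, β ≤ γ → Vh δ A β ⊆ Vh δ A γ := by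
  intro γ
  induction γ using Ordinal.induction with
  | _ γ IH =>
    intro β hβ
    rcases eq_or_lt_of_le hβ with rfl | hlt
    · exact subset_rfl
    rcases Ordinal.zero_or_succ_or_isSuccLimit γ with rfl | ⟨γ', rfl⟩ | hlim
    · exact absurd hlt (not_lt_of_ge (zero_le (a := β)))
    · rw [Vh_succ]
      exact (IH γ' (Order.lt_succ γ') (Order.le_of_lt_succ hlt)).trans Set.subset_union_right
    · rw [Vh_limit _ _ hlim]
      exact fun a ha => ⟨β, hlt, ha⟩

/-- Key support lemma: every element of the hierarchy has a small "support" `s` and a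
cardinal bound `μ` such that it appears in the small hierarchy over any `x ⊇ s`
with `kap κZ x` a regular cardinal at least `μ`. -/
theorem Vh_support (κZ lamZ : ZFSet.{u}) (hκ : (cardZ κZ).IsInaccessible) :
    ∀ (β : Ordinal.{u + 1}) (a : ZFSet.{u}), a ∈ Vh (cardZ κZ) lamZ.toSet β →
    ∃ (μ : Cardinal.{u + 1}) (s : Set ZFSet.{u}),
      μ < cardZ κZ ∧ s ⊆ lamZ.toSet ∧ #↥s < cardZ κZ ∧
      ∀ x : ZFSet.{u}, s ⊆ x.toSet → μ ≤ kap κZ x → (kap κZ x).IsRegular →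
        ∃ γ < (kap κZ x).ord, a ∈ Vh (kap κZ x) x.toSet γ := by
  obtain ⟨hℵ₀, hreg, hsl⟩ := hκ
  replace hreg : (cardZ κZ).IsRegular := Cardinal.IsInaccessible.isRegular ⟨hℵ₀, hreg, hsl⟩
  intro β
  induction β using Ordinal.induction with
  | _ β IH =>
    intro a ha
    rcases Ordinal.zero_or_succ_or_isSuccLimit β with rfl | ⟨β', rfl⟩ | hlim
    · -- base case: `a ∈ lamZ`
      rw [Vh_zero] at ha
      refine ⟨ℵ₀, {a}, hℵ₀, by simpa using ha, by simpa using Cardinal.one_lt_aleph0.trans hℵ₀, ?_⟩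
      intro x hsx hμx hregx
      refine ⟨0, (Cardinal.isSuccLimit_ord (hregx.aleph0_le)).pos, ?_⟩
      rw [Vh_zero]; exact hsx rfl
    · -- successor case
      rw [Vh_succ] at ha
      rcases ha with ⟨hsub, hcard⟩ | ha
      · have IH' := fun b : ↥a.toSet => IH β' (Order.lt_succ β') b (hsub b.2)
        choose μf sf hμf hsfsub hsfcard hmain using IH'
        have hacard : #↥a.toSet < cardZ κZ := hcard
        have hμ0 : (⨆ b : ↥a.toSet, μf b) < cardZ κZ :=
          Cardinal.iSup_lt_of_isRegular hreg hacard hμf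
        have hsucc : Order.succ (cardZ a) < cardZ κZ :=
          (Order.succ_le_of_lt (Cardinal.cantor _)).trans_lt (hsl hcard)
        refine ⟨(⨆ b : ↥a.toSet, μf b) ⊔ Order.succ (cardZ a), ⋃ b : ↥a.toSet, sf b,
          sup_lt_iff.2 ⟨hμ0, hsucc⟩, Set.iUnion_subset hsfsub, ?_, ?_⟩
        · refine lt_of_le_of_lt (Cardinal.mk_iUnion_le _) ?_
          exact Cardinal.mul_lt_of_lt hℵ₀.le hacard
            (Cardinal.iSup_lt_of_isRegular hreg hacard hsfcard)
        · intro x hsx hμx hregx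
          have hμx' : ∀ b : ↥a.toSet, μf b ≤ kap κZ x := fun b =>
            ((le_ciSup (Cardinal.bddAbove_range _) b).trans le_sup_left).trans hμx
          have hmain' := fun b : ↥a.toSet =>
            hmain b x (le_trans (Set.subset_iUnion _ b) hsx) (hμx' b) hregx
          choose γf hγlt hγmem using hmain'
          have hνℵ₀ : ℵ₀ ≤ kap κZ x := hregx.aleph0_le
          have hord : Order.IsSuccLimit ((kap κZ x).ord) := Cardinal.isSuccLimit_ord hνℵ₀
          have haν : cardZ a < kap κZ x :=
            lt_of_lt_of_le (Order.lt_succ _) ((le_sup_right).trans hμx)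
          have hγsup : (⨆ b : ↥a.toSet, γf b) < (kap κZ x).ord :=
            Cardinal.iSup_lt_ord_of_isRegular hregx ((show #↥a.toSet = cardZ a from rfl) ▸ haν) hγlt
          refine ⟨Order.succ (⨆ b : ↥a.toSet, γf b), hord.succ_lt hγsup, ?_⟩
          rw [Vh_succ]
          left
          refine ⟨?_, haν⟩
          intro b hb
          exact Vh_mono _ _ (Ordinal.le_iSup γf ⟨b, hb⟩) (hγmem ⟨b, hb⟩)
      · exact IH β' (Order.lt_succ β') a ha
    · -- limit case
      rw [Vh_limit _ _ hlim] at ha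
      obtain ⟨β'', hβ'', ha⟩ := ha
      exact IH β'' hβ'' a ha

/-- If `κ` is inaccessible, `λ ≥ κ`, `X ⊆ V_κ(κ, λ)` and `|X| < κ`,
then there is `x ∈ P_κλ` with `X ⊆ V_{κ_x}(κ_x, x)`. -/
theorem small_subset_of_hierarchy_covered (κZ lamZ : ZFSet.{u})
    (hκ : InaccZ κZ) (hlamord : IsOrd lamZ) (hκlam : κZ ⊆ lamZ)
    (X : Set ZFSet.{u}) (hX : X ⊆ Vh (cardZ κZ) lamZ.toSet ((cardZ κZ).ord))
    (hXcard : #↥X < cardZ κZ) :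
    ∃ x ∈ PKL κZ lamZ, X ⊆ Vh (kap κZ x) x.toSet ((kap κZ x).ord) := by
  obtain ⟨-, hinacc⟩ := hκ
  obtain ⟨hℵ₀, hreg, hsl⟩ := hinacc
  have hreg' : (cardZ κZ).IsRegular := Cardinal.IsInaccessible.isRegular ⟨hℵ₀, hreg, hsl⟩
  -- get supports for all elements of `X`
  have key := fun a : ↥X => Vh_support κZ lamZ ⟨hℵ₀, hreg, hsl⟩ _ a (hX a.2)
  choose μf sf hμf hsfsub hsfcard hmain using key
  have hμ0 : (⨆ a : ↥X, μf a) < cardZ κZ := Cardinal.iSup_lt_of_isRegular hreg' hXcard hμf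
  set s0 : Set ZFSet.{u} := ⋃ a : ↥X, sf a with hs0
  have hs0sub : s0 ⊆ lamZ.toSet := Set.iUnion_subset hsfsub
  have hs0card : #↥s0 < cardZ κZ :=
    lt_of_le_of_lt (Cardinal.mk_iUnion_le _)
      (Cardinal.mul_lt_of_lt hℵ₀.le hXcard (Cardinal.iSup_lt_of_isRegular hreg' hXcard hsfcard))
  -- the target cardinal μ*
  set μs : Cardinal.{u + 1} := Order.succ ((⨆ a : ↥X, μf a) ⊔ #↥s0 ⊔ ℵ₀) with hμs
  have hbaseℵ₀ : ℵ₀ ≤ (⨆ a : ↥X, μf a) ⊔ #↥s0 ⊔ ℵ₀ := le_sup_right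
  have hμsreg : μs.IsRegular := Cardinal.isRegular_succ hbaseℵ₀
  have hbaselt : (⨆ a : ↥X, μf a) ⊔ #↥s0 ⊔ ℵ₀ < cardZ κZ :=
    sup_lt_iff.2 ⟨sup_lt_iff.2 ⟨hμ0, hs0card⟩, hℵ₀⟩
  have hμslt : μs < cardZ κZ :=
    (Order.succ_le_of_lt (Cardinal.cantor _)).trans_lt (hsl hbaselt)
  -- find a subset `T` of `κZ` of size `μs`
  obtain ⟨p, hp⟩ := Cardinal.le_mk_iff_exists_set.1 hμslt.le
  set T : Set ZFSet.{u} := Subtype.val '' p with hT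
  have hTcard : #↥T = μs := by rw [hT, Cardinal.mk_image_eq Subtype.val_injective, hp]
  have hTκ : T ⊆ κZ.toSet := by rintro z ⟨w, -, rfl⟩; exact w.2
  have hTlam : T ⊆ lamZ.toSet := fun z hz => hκlam (hTκ hz)
  -- the witness `x`
  set x : ZFSet.{u} := ZFSet.sep (fun z => z ∈ s0 ∪ T) lamZ with hx
  have hxtoSet : x.toSet = s0 ∪ T := by
    ext z
    change z ∈ x ↔ z ∈ s0 ∪ T
    rw [hx, ZFSet.mem_sep]
    constructor
    · rintro ⟨-, hz⟩; exact hz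
    · intro hz
      exact ⟨by rcases hz with hz | hz; exacts [hs0sub hz, hTlam hz], hz⟩
  have hxsub : x ⊆ lamZ := fun z hz => (ZFSet.mem_sep.1 hz).1
  have hs0x : s0 ⊆ x.toSet := by rw [hxtoSet]; exact Set.subset_union_left
  have hxcard : cardZ x < cardZ κZ := by
    have : cardZ x ≤ #↥s0 + #↥T := by
      rw [cardZ, hxtoSet]; exact Cardinal.mk_union_le _ _
    refine this.trans_lt (Cardinal.add_lt_of_lt hℵ₀.le hs0card ?_)
    rw [hTcard]; exact hμslt
  -- compute `kap κZ x = μs`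
  have hkap : kap κZ x = μs := by
    have hsub1 : T ⊆ (x ∩ κZ).toSet := by
      intro z hz
      rw [show (x ∩ κZ).toSet = x.toSet ∩ κZ.toSet from Set.ext fun _ => ZFSet.mem_inter]
      exact ⟨by rw [hxtoSet]; exact Or.inr hz, hTκ hz⟩
    have hge : μs ≤ kap κZ x := by
      rw [← hTcard]; exact Cardinal.mk_le_mk_of_subset hsub1
    have hle : kap κZ x ≤ μs := by
      have h1 : kap κZ x ≤ cardZ x := by
        rw [kap, cardZ, cardZ, show (x ∩ κZ).toSet = x.toSet ∩ κZ.toSet from Set.ext fun _ => ZFSet.mem_inter]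
        exact Cardinal.mk_le_mk_of_subset Set.inter_subset_left
      have h2 : cardZ x ≤ #↥s0 + #↥T := by
        rw [cardZ, hxtoSet]; exact Cardinal.mk_union_le _ _
      refine h1.trans (h2.trans ?_)
      rw [hTcard, Cardinal.add_eq_max' hμsreg.aleph0_le, max_eq_right]
      exact le_of_lt (lt_of_le_of_lt (le_sup_right.trans le_sup_left) (Order.lt_succ _))
    exact le_antisymm hle hge
  have hμfx : ∀ a : ↥X, μf a ≤ kap κZ x := fun a => by
    rw [hkap]
    exact ((le_ciSup (Cardinal.bddAbove_range _) a).trans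
      (le_sup_left.trans le_sup_left)).trans (Order.le_succ _)
  have hregx : (kap κZ x).IsRegular := by rw [hkap]; exact hμsreg
  refine ⟨x, show x ⊆ lamZ ∧ cardZ x < cardZ κZ from ⟨hxsub, hxcard⟩, ?_⟩
  intro a haX
  have hsub' : sf ⟨a, haX⟩ ⊆ x.toSet :=
    (Set.subset_iUnion (fun b : ↥X => sf b) ⟨a, haX⟩).trans hs0x
  obtain ⟨γ, hγ, hmem⟩ := hmain ⟨a, haX⟩ x hsub' (hμfx ⟨a, haX⟩) hregx
  exact Vh_mono _ _ hγ.le hmem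

end TwoCardinalWC
end
end
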